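/- Let A be a UFD containing ℚ, let B be an irreducible locally nilpotent derivation of A, and let E be a locally nilpotent derivation of A that vanishes on ker B. Then there exists f ∈ ker B with E = f·B. -/

import Mathlib

/-- Local nilpotency of a map. -/
def IsLND {A : Type*} [Zero A] (D : A → A) : Prop := ∀ a : A, ∃ n : ℕ, D^[n] a = 0

/-- A locally nilpotent derivation `B` is irreducible if `B ≠ 0` and whenever
`B = g • B'` with `B'` locally nilpotent and `g ∈ ker B'`, `g` is a unit. -/
def IsIrreducibleLND {A : Type*} [CommRing A] [Algebra ℚ A] (B : Derivation ℚ A A) : Prop :=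
  B ≠ 0 ∧ IsLND ⇑B ∧
    ∀ (g : A) (B' : Derivation ℚ A A), IsLND ⇑B' → B' g = 0 → B = g • B' → IsUnit g

section LNDAux
set_option linter.unusedSectionVars false
set_option linter.unusedVariables false
variable {A : Type*} [CommRing A] [IsDomain A] [Algebra ℚ A]

lemma LND.ch0 (x : A) (m : ℕ) (hm : m ≠ 0) (hx : x ≠ 0) : m • x ≠ 0 := by
  haveI : CharZero A := charZero_of_injective_algebraMap (algebraMap ℚ A).injective
  rw [nsmul_eq_mul]
  exact mul_ne_zero (Nat.cast_ne_zero.mpr hm) hx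

variable (B : Derivation ℚ A A)

lemma LND.iter_zero_of_le {x : A} {m k : ℕ} (h : B^[m] x = 0) (hk : m ≤ k) : B^[k] x = 0 := by
  obtain ⟨j, rfl⟩ := Nat.exists_eq_add_of_le hk
  rw [add_comm, Function.iterate_add_apply, h]
  exact Function.iterate_fixed (map_zero B) j

open Finset in
lemma LND.iter_leibniz (n : ℕ) (x y : A) :
    B^[n] (x * y) = ∑ k ∈ range (n+1), (n.choose k) • (B^[k] x * B^[n-k] y) := by
  induction n with
  | zero => simp
  | succ n ih =>
    rw [Function.iterate_succ_apply', ih, map_sum]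
    have step : ∀ k ∈ range (n+1), B ((n.choose k) • (B^[k] x * B^[n-k] y))
        = (n.choose k) • (B^[k+1] x * B^[n-k] y) + (n.choose k) • (B^[k] x * B^[n-k+1] y) := by
      intro k hk
      rw [map_nsmul, B.leibniz, smul_eq_mul, smul_eq_mul, smul_add,
        Function.iterate_succ_apply', Function.iterate_succ_apply']
      ring_nf
    rw [Finset.sum_congr rfl step, Finset.sum_add_distrib]
    have h1 : ∑ k ∈ range (n+1), (n.choose k) • (B^[k] x * B^[n-k+1] y)
        = (∑ k ∈ range (n+1), (n.choose (k+1)) • (B^[k+1] x * B^[n-k] y)) + x * B^[n+1] y := by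
      rw [Finset.sum_range_succ' (fun k => (n.choose k) • (B^[k] x * B^[n-k+1] y)) n,
        Finset.sum_range_succ (fun k => (n.choose (k+1)) • (B^[k+1] x * B^[n-k] y)) n]
      simp only [Nat.choose_succ_self, zero_smul, add_zero, Nat.choose_zero_right, one_smul,
        Function.iterate_zero_apply, Nat.sub_zero]
      congr 1
      apply Finset.sum_congr rfl
      intro k hk
      simp only [Finset.mem_range] at hk
      congr 3
      omega
    rw [h1, ← add_assoc, ← Finset.sum_add_distrib]
    have h2 : ∀ k ∈ range (n+1),
        (n.choose k) • (B^[k+1] x * B^[n-k] y) + (n.choose (k+1)) • (B^[k+1] x * B^[n-k] y)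
        = ((n+1).choose (k+1)) • (B^[k+1] x * B^[n+1-(k+1)] y) := by
      intro k hk
      rw [← add_smul, Nat.succ_sub_succ, ← Nat.choose_succ_succ]
    have h3 : x * B^[n+1] y = ((n+1).choose 0) • (B^[0] x * B^[n+1-0] y) := by simp
    rw [Finset.sum_congr rfl h2, h3,
      ← Finset.sum_range_succ' (fun k => ((n+1).choose k) • (B^[k] x * B^[n+1-k] y)) (n+1)]

lemma LND.top_zero {x y : A} {m n : ℕ} (hx : B^[m+1] x = 0) (hy : B^[n+1] y = 0) :
    B^[m+n+1] (x * y) = 0 := by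
  rw [LND.iter_leibniz]
  apply Finset.sum_eq_zero
  intro k hk
  rcases le_or_gt (m+1) k with h | h
  · rw [LND.iter_zero_of_le B hx h, zero_mul, smul_zero]
  · rw [LND.iter_zero_of_le B hy (by omega : n+1 ≤ m+n+1-k), mul_zero, smul_zero]

lemma LND.top_formula {x y : A} {m n : ℕ} (hx : B^[m+1] x = 0) (hy : B^[n+1] y = 0) :
    B^[m+n] (x * y) = ((m+n).choose m) • (B^[m] x * B^[n] y) := by
  rw [LND.iter_leibniz, Finset.sum_eq_single m]
  · rw [Nat.add_sub_cancel_left]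
  · intro k hk hkm
    simp only [Finset.mem_range] at hk
    rcases lt_or_gt_of_ne hkm with h | h
    · rw [LND.iter_zero_of_le B hy (by omega : n+1 ≤ m+n-k), mul_zero, smul_zero]
    · rw [LND.iter_zero_of_le B hx (by omega : m+1 ≤ k), zero_mul, smul_zero]
  · intro h
    simp only [Finset.mem_range] at h
    omega

variable (hB : IsLND ⇑B)
include hB

/-- The degree of `x` : the least `n` with `B^[n] x = 0`. -/
noncomputable def Bdeg (x : A) : ℕ := sInf {n | B^[n] x = 0}

lemma Bdeg_spec (x : A) : B^[Bdeg B x] x = 0 := Nat.sInf_mem (hB x)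

omit hB in
lemma Bdeg_le {x : A} {k : ℕ} (h : B^[k] x = 0) : Bdeg B x ≤ k := Nat.sInf_le h

omit hB in
lemma Bdeg_min {x : A} {k : ℕ} (h : k < Bdeg B x) : B^[k] x ≠ 0 :=
  Nat.notMem_of_lt_sInf h

lemma Bdeg_pos {x : A} (hx : x ≠ 0) : 1 ≤ Bdeg B x := by
  by_contra h
  push_neg at h
  have h0 := Bdeg_spec B hB x
  rw [Nat.lt_one_iff.mp h] at h0
  exact hx h0

lemma Bdeg_mul {x y : A} (hx : x ≠ 0) (hy : y ≠ 0) :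
    Bdeg B (x * y) + 1 = Bdeg B x + Bdeg B y := by
  obtain ⟨m, hm⟩ : ∃ m, Bdeg B x = m + 1 :=
    ⟨Bdeg B x - 1, by have := Bdeg_pos B hB hx; omega⟩
  obtain ⟨n, hn⟩ : ∃ n, Bdeg B y = n + 1 :=
    ⟨Bdeg B y - 1, by have := Bdeg_pos B hB hy; omega⟩
  have hxm : B^[m+1] x = 0 := hm ▸ Bdeg_spec B hB x
  have hyn : B^[n+1] y = 0 := hn ▸ Bdeg_spec B hB y
  have h1 : Bdeg B (x*y) ≤ m+n+1 := Bdeg_le B (LND.top_zero B hxm hyn)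
  have h2 : B^[m+n] (x*y) ≠ 0 := by
    rw [LND.top_formula B hxm hyn]
    exact LND.ch0 _ _ (Nat.choose_pos (by omega)).ne'
      (mul_ne_zero (Bdeg_min B (by omega)) (Bdeg_min B (by omega)))
  have h3 : m + n < Bdeg B (x*y) := by
    by_contra h
    push_neg at h
    exact h2 (LND.iter_zero_of_le B (Bdeg_spec B hB _) h)
  omega

lemma Bdeg_apply {x : A} (hx : B x ≠ 0) : Bdeg B (B x) + 1 = Bdeg B x := by
  have key : ∀ k, B^[k] (B x) = B^[k+1] x := fun k =>
    (Function.iterate_succ_apply (⇑B) k x).symm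
  obtain ⟨m, hm⟩ : ∃ m, Bdeg B x = m + 1 + 1 := by
    have h1 := Bdeg_pos B hB (x := x) (fun h => hx (by rw [h]; exact map_zero B))
    have h2 : 1 < Bdeg B x := by
      rcases Nat.lt_or_ge 1 (Bdeg B x) with h | h
      · exact h
      · exact absurd (LND.iter_zero_of_le B (Bdeg_spec B hB x) (by omega) :
          B^[1] x = 0) (by simpa using hx)
    exact ⟨Bdeg B x - 2, by omega⟩
  have hle : Bdeg B (B x) ≤ m + 1 := Bdeg_le B (by rw [key]; exact hm ▸ Bdeg_spec B hB x)
  have hgt : m < Bdeg B (B x) := by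
    by_contra h
    push_neg at h
    have h0 : B^[m] (B x) = 0 := LND.iter_zero_of_le B (Bdeg_spec B hB _) h
    rw [key] at h0
    exact Bdeg_min B (by omega : m + 1 < Bdeg B x) h0
  omega

end LNDAux

section MainAux
set_option linter.unusedSectionVars false
set_option linter.unusedVariables false
variable {A : Type*} [CommRing A] [IsDomain A] [Algebra ℚ A]

noncomputable def LND.qq (k : ℕ) : ℚ := (-1)^k / k.factorial

/-- The image of `(-1)^k/k!` in `A`. -/
noncomputable def LND.QQ (A : Type*) [CommRing A] [Algebra ℚ A] (k : ℕ) : A :=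
  algebraMap ℚ A (LND.qq k)

lemma LND.QQ_succ (k : ℕ) : LND.QQ A (k+1) * ((k+1 : ℕ) : A) = -(LND.QQ A k) := by
  rw [LND.QQ, LND.QQ, ← map_natCast (algebraMap ℚ A) (k+1), ← map_mul, ← map_neg]
  congr 1
  unfold LND.qq
  rw [Nat.factorial_succ]
  have h1 : (k.factorial : ℚ) ≠ 0 := Nat.cast_ne_zero.mpr (Nat.factorial_ne_zero k)
  push_cast
  field_simp
  ring

lemma LND.QQ_zero : LND.QQ A 0 = 1 := by simp [LND.QQ, LND.qq]

lemma LND.der_QQ (D : Derivation ℚ A A) (k : ℕ) : D (LND.QQ A k) = 0 :=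
  D.map_algebraMap (LND.qq k)

lemma LND.der_QQ_mul (D : Derivation ℚ A A) (k : ℕ) (x : A) :
    D (LND.QQ A k * x) = LND.QQ A k * D x := by
  rw [D.leibniz, LND.der_QQ, smul_eq_mul, smul_eq_mul, mul_zero, add_zero]

open Finset in
lemma LND.tele {f G : ℕ → A} {n : ℕ} (hf : ∀ k < n, f (k+1) = -G k) :
    ∑ k ∈ range (n+1), (f k + G k) = G n + f 0 := by
  rw [Finset.sum_range_succ' (fun k => f k + G k) n]
  have h : ∀ k ∈ range n, f (k+1) + G (k+1) = G (k+1) - G k := by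
    intro k hk
    rw [hf k (mem_range.mp hk)]
    ring
  rw [Finset.sum_congr rfl h, Finset.sum_range_sub G n]
  ring

variable {B E : Derivation ℚ A A}

lemma LND.hder {c : A} (D : Derivation ℚ A A) (hDc : D c = 0) (s : A) (k m : ℕ) (w : A) :
    D (s^k * (c^m * w)) = (k : A) * (s^(k-1) * (c^m * (D s * w))) + s^k * (c^m * D w) := by
  simp only [Derivation.leibniz, Derivation.leibniz_pow, hDc, smul_zero, smul_eq_mul,
    nsmul_eq_mul, mul_zero, add_zero]
  ring

open LND in
lemma LND.main_id (hB : IsLND ⇑B) (hEker : ∀ a : A, B a = 0 → E a = 0)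
    {s : A} (hcne : B s ≠ 0) (hc : B (B s) = 0) :
    ∀ (n : ℕ) (a : A), B^[n] a = 0 → B s * E a = E s * B a := by
  have hEc : E (B s) = 0 := hEker _ hc
  intro n
  induction n using Nat.strong_induction_on with
  | _ n IH =>
    intro a ha
    match n with
    | 0 =>
      simp only [Function.iterate_zero_apply] at ha
      subst ha
      simp
    | (N+1) =>
      set c := B s with hcdef
      set u : A := ∑ k ∈ Finset.range (N+1), QQ A k * (s^k * (c^(N-k) * B^[k] a)) with hu
      -- Step A : B u = 0
      have hBterm : ∀ k, B (QQ A k * (s^k * (c^(N-k) * B^[k] a)))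
          = (QQ A k * (k : A)) * (s^(k-1) * (c^(N-k) * (c * B^[k] a)))
            + QQ A k * (s^k * (c^(N-k) * B^[k+1] a)) := by
        intro k
        rw [der_QQ_mul, hder B hc, Function.iterate_succ_apply']
        ring
      have hBu : B u = 0 := by
        rw [hu, map_sum, Finset.sum_congr rfl (fun k _ => hBterm k),
          tele (f := fun k => (QQ A k * (k : A)) * (s^(k-1) * (c^(N-k) * (c * B^[k] a))))
            (G := fun k => QQ A k * (s^k * (c^(N-k) * B^[k+1] a)))]
        · rw [ha]
          simp
        · intro k hk
          have hNk : N - k = N - (k+1) + 1 := by omega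
          rw [hNk, pow_succ, Nat.add_sub_cancel]
          linear_combination (s^k * ((c^(N-(k+1)) * c) * B^[k+1] a)) * QQ_succ (A := A) k
      have hEu : E u = 0 := hEker u hBu
      -- Step B : expand c * E u
      have hEterm : ∀ k, c * E (QQ A k * (s^k * (c^(N-k) * B^[k] a)))
          = (QQ A k * (k : A)) * (s^(k-1) * (c^(N-k) * (c * (E s * B^[k] a))))
            + QQ A k * (s^k * (c^(N-k) * (c * E (B^[k] a)))) := by
        intro k
        rw [der_QQ_mul, hder E hEc]
        ring
      have hIH : ∀ k < N, c * E (B^[k+1] a) = E s * B^[k+1+1] a := by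
        intro k hk
        have h1 : B^[N - k] (B^[k+1] a) = 0 := by
          rw [← Function.iterate_add_apply]
          have h2 : N - k + (k + 1) = N + 1 := by omega
          rw [h2]; exact ha
        have h3 := IH (N - k) (by omega) (B^[k+1] a) h1
        rw [← Function.iterate_succ_apply' B (k+1) a] at h3
        exact h3
      have expand : c * E u = ∑ k ∈ Finset.range (N+1),
          ((QQ A k * (k : A)) * (s^(k-1) * (c^(N-k) * (c * (E s * B^[k] a))))
            + QQ A k * (s^k * (c^(N-k) * (c * E (B^[k] a))))) := by
        rw [hu, map_sum, Finset.mul_sum]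
        exact Finset.sum_congr rfl (fun k _ => hEterm k)
      rw [hEu, mul_zero] at expand
      rw [Finset.sum_range_succ'] at expand
      have hshift : ∀ k ∈ Finset.range N,
          ((QQ A (k+1) * ((k+1 : ℕ) : A)) * (s^(k+1-1) * (c^(N-(k+1)) * (c * (E s * B^[k+1] a))))
            + QQ A (k+1) * (s^(k+1) * (c^(N-(k+1)) * (c * E (B^[k+1] a)))))
          = (QQ A (k+1) * (s^(k+1) * (c^(N-(k+1)) * (E s * B^[k+1+1] a))))
            - (QQ A k * (s^k * (c^(N-k) * (E s * B^[k+1] a)))) := by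
        intro k hk
        rw [Finset.mem_range] at hk
        rw [hIH k hk]
        have hNk : N - k = N - (k+1) + 1 := by omega
        rw [hNk, pow_succ, Nat.add_sub_cancel]
        linear_combination (s^k * ((c^(N-(k+1)) * c) * (E s * B^[k+1] a))) * QQ_succ (A := A) k
      rw [Finset.sum_congr rfl hshift,
        Finset.sum_range_sub (fun k => QQ A k * (s^k * (c^(N-k) * (E s * B^[k+1] a)))) N]
        at expand
      rw [ha] at expand
      simp only [Nat.cast_zero, mul_zero, zero_mul, zero_add, QQ_zero, one_mul, pow_zero,
        Nat.sub_zero, Nat.sub_self, smul_zero, Function.iterate_one, Function.iterate_zero_apply]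
        at expand
      have hfin : c^N * (c * E a) = c^N * (E s * B a) := by linear_combination -expand
      exact mul_left_cancel₀ (pow_ne_zero N hcne) hfin

end MainAux

section DivAux
set_option linter.unusedSectionVars false
set_option linter.unusedVariables false
variable {A : Type*} [CommRing A] [IsDomain A] [Algebra ℚ A]
variable (B : Derivation ℚ A A)

/-- The derivation `B / p`, when `p` divides all values of `B`. -/
noncomputable def LND.divDer (p : A) (hp : p ≠ 0) (h : ∀ a, p ∣ B a) : Derivation ℚ A A where
  toFun a := (h a).choose
  map_add' a b := by
    apply mul_left_cancel₀ hp
    rw [mul_add, ← (h a).choose_spec, ← (h b).choose_spec, ← (h (a+b)).choose_spec, map_add]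
  map_smul' q a := by
    apply mul_left_cancel₀ hp
    simp only [RingHom.id_apply]
    rw [← (h (q • a)).choose_spec, Derivation.map_smul]
    conv_lhs => rw [(h a).choose_spec]
    rw [mul_smul_comm]
  map_one_eq_zero' := by
    apply mul_left_cancel₀ hp
    show p * (h 1).choose = p * 0
    rw [← (h 1).choose_spec, Derivation.map_one_eq_zero, mul_zero]
  leibniz' a b := by
    apply mul_left_cancel₀ hp
    show p * (h (a*b)).choose = p * (a • (h b).choose + b • (h a).choose)
    rw [← (h (a*b)).choose_spec, B.leibniz, smul_eq_mul, smul_eq_mul, mul_add,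
      smul_eq_mul, smul_eq_mul]
    conv_lhs => rw [(h a).choose_spec, (h b).choose_spec]
    ring

lemma LND.divDer_spec (p : A) (hp : p ≠ 0) (h : ∀ a, p ∣ B a) (a : A) :
    B a = p * LND.divDer B p hp h a := (h a).choose_spec

lemma LND.divDer_iter (p : A) (hp : p ≠ 0) (h : ∀ a, p ∣ B a) (hBp : B p = 0)
    (n : ℕ) (a : A) : B^[n] a = p^n * (LND.divDer B p hp h)^[n] a := by
  have hp0 : LND.divDer B p hp h p = 0 := by
    apply mul_left_cancel₀ hp
    rw [← LND.divDer_spec, hBp, mul_zero]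
  have hmulB : ∀ (m : ℕ) (x : A), B (p^m * x) = p^m * B x := by
    intro m x
    rw [Derivation.leibniz, smul_eq_mul, smul_eq_mul, Derivation.leibniz_pow, hBp]
    simp
  induction n with
  | zero => simp
  | succ n ih =>
    rw [Function.iterate_succ_apply', Function.iterate_succ_apply', ih, hmulB,
      LND.divDer_spec B p hp h ((LND.divDer B p hp h)^[n] a), pow_succ]
    ring

lemma LND.Bp_zero (hB : IsLND ⇑B) {p : A} (hp : p ≠ 0) (h : ∀ a, p ∣ B a) : B p = 0 := by
  by_contra hBp
  obtain ⟨t, ht⟩ := h p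
  have htne : t ≠ 0 := fun h0 => hBp (by rw [ht, h0, mul_zero])
  have h1 := Bdeg_apply B hB hBp
  rw [ht] at h1
  have h2 := Bdeg_mul B hB hp htne
  have h3 := Bdeg_pos B hB htne
  omega

lemma LND.exists_not_dvd (hB : IsLND ⇑B) (hirr : IsIrreducibleLND B) {p : A} (hp : Prime p) :
    ∃ a, ¬ p ∣ B a := by
  by_contra hcon
  push_neg at hcon
  have hBp : B p = 0 := LND.Bp_zero B hB hp.ne_zero hcon
  set B' := LND.divDer B p hp.ne_zero hcon with hB'
  have hB'lnd : IsLND ⇑B' := by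
    intro a
    obtain ⟨n, hn⟩ := hB a
    refine ⟨n, ?_⟩
    have h1 := LND.divDer_iter B p hp.ne_zero hcon hBp n a
    rw [hn] at h1
    exact (mul_eq_zero.mp h1.symm).resolve_left (pow_ne_zero n hp.ne_zero)
  have hB'p : B' p = 0 := by
    apply mul_left_cancel₀ hp.ne_zero
    rw [← LND.divDer_spec, hBp, mul_zero]
  have hfac : B = p • B' := by
    apply Derivation.ext
    intro a
    rw [LND.divDer_spec B p hp.ne_zero hcon a]
    simp [smul_eq_mul, hB']
  exact hp.not_unit (hirr.2.2 p B' hB'lnd hB'p hfac)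

lemma LND.dvd_of_forall [UniqueFactorizationMonoid A] (hB : IsLND ⇑B)
    (hirr : IsIrreducibleLND B) (hBne : ∃ a, B a ≠ 0) (c y : A)
    (hy : ∀ a, c ∣ y * B a) : c ∣ y := by
  induction c using UniqueFactorizationMonoid.induction_on_prime generalizing y with
  | h₁ =>
    obtain ⟨a₀, ha₀⟩ := hBne
    have h1 := hy a₀
    rw [zero_dvd_iff] at h1
    rcases mul_eq_zero.mp h1 with h | h
    · rw [h]
    · exact absurd h ha₀
  | h₂ x hx => exact hx.dvd
  | h₃ a p ha hp IH =>
    obtain ⟨a₀, ha₀⟩ := LND.exists_not_dvd B hB hirr hp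
    have hpy : p ∣ y := by
      have h1 : p ∣ y * B a₀ := (dvd_mul_right p a).trans (hy a₀)
      exact (hp.dvd_or_dvd h1).resolve_right ha₀
    obtain ⟨y', rfl⟩ := hpy
    refine mul_dvd_mul_left p (IH y' fun b => ?_)
    have h2 : p * a ∣ p * (y' * B b) := by
      rw [show p * (y' * B b) = p * y' * B b by ring]
      exact hy b
    exact (mul_dvd_mul_iff_left hp.ne_zero).mp h2

lemma LND.ker_of_mult (hB : IsLND ⇑B) {E : Derivation ℚ A A} (hE : IsLND ⇑E) {f s : A}
    (hf : ∀ a, E a = f * B a) (hs : B s ≠ 0) (hss : B (B s) = 0) (hfne : f ≠ 0) :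
    B f = 0 := by
  by_contra hBf
  have hfne0 : Bdeg B (B f) ≥ 1 := Bdeg_pos B hB hBf
  have hdf : 2 ≤ Bdeg B f := by
    have h1 := Bdeg_apply B hB hBf
    omega
  have key : ∀ x : A, 2 ≤ Bdeg B x → E x ≠ 0 ∧ 2 ≤ Bdeg B (E x) := by
    intro x hx
    have hxne : x ≠ 0 := by
      rintro rfl
      have : Bdeg B (0 : A) ≤ 0 := Bdeg_le B (by simp)
      omega
    have hBx : B x ≠ 0 := Bdeg_min B (by omega : 1 < Bdeg B x)
    have hEx : E x = f * B x := hf x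
    refine ⟨hEx ▸ mul_ne_zero hfne hBx, ?_⟩
    have h1 : Bdeg B (f * B x) + 1 = Bdeg B f + Bdeg B (B x) := Bdeg_mul B hB hfne hBx
    have h2 : Bdeg B (B x) + 1 = Bdeg B x := Bdeg_apply B hB hBx
    rw [← hEx] at h1
    omega
  have iter : ∀ n : ℕ, E^[n] s ≠ 0 ∧ 2 ≤ Bdeg B (E^[n] s) := by
    intro n
    induction n with
    | zero =>
      simp only [Function.iterate_zero_apply]
      constructor
      · exact fun h0 => hs (by rw [h0]; exact map_zero B)
      · rcases Nat.lt_or_ge (Bdeg B s) 2 with h | h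
        · exact absurd (LND.iter_zero_of_le B (Bdeg_spec B hB s) (by omega : Bdeg B s ≤ 1))
            (by simpa using hs)
        · exact h
    | succ n ih =>
      have h1 := key _ ih.2
      rw [← Function.iterate_succ_apply' E n s] at h1
      exact h1
  obtain ⟨n, hn⟩ := hE s
  exact (iter n).1 hn

end DivAux

/-- If `A` is a UFD containing `ℚ`, `B` an irreducible locally nilpotent
derivation of `A`, and `E` a locally nilpotent derivation of `A` vanishing on
`ker B`, then `E = f • B` for some `f ∈ ker B`. -/
theorem lnd_vanishing_on_ker_is_multiple {A : Type*} [CommRing A] [IsDomain A]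
    [UniqueFactorizationMonoid A] [Algebra ℚ A]
    (B E : Derivation ℚ A A) (hB : IsLND ⇑B) (hirr : IsIrreducibleLND B)
    (hE : IsLND ⇑E) (hEker : ∀ a : A, B a = 0 → E a = 0) :
    ∃ f : A, B f = 0 ∧ E = f • B := by
  classical
  -- B is nonzero somewhere
  have hBne : ∃ a, B a ≠ 0 := by
    by_contra hcon
    push_neg at hcon
    exact hirr.1 (Derivation.ext fun a => by rw [hcon a]; rfl)
  obtain ⟨a₀, ha₀⟩ := hBne
  -- find a local slice s : B s ≠ 0, B (B s) = 0
  obtain ⟨s, hs, hss⟩ : ∃ s : A, B s ≠ 0 ∧ B (B s) = 0 := by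
    have h2 : 2 ≤ Bdeg B a₀ := by
      rcases Nat.lt_or_ge (Bdeg B a₀) 2 with h | h
      · exact absurd (LND.iter_zero_of_le B (Bdeg_spec B hB a₀) (by omega : Bdeg B a₀ ≤ 1))
          (by simpa using ha₀)
      · exact h
    obtain ⟨d, hd⟩ : ∃ d, Bdeg B a₀ = d + 2 := ⟨Bdeg B a₀ - 2, by omega⟩
    refine ⟨B^[d] a₀, ?_, ?_⟩
    · have h3 : B (B^[d] a₀) = B^[d+1] a₀ := (Function.iterate_succ_apply' (⇑B) d a₀).symm
      rw [h3]
      exact Bdeg_min B (by omega)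
    · have h4 : B (B (B^[d] a₀)) = B^[d+2] a₀ := by
        rw [Function.iterate_succ_apply' (⇑B) (d+1) a₀, Function.iterate_succ_apply' (⇑B) d a₀]
      rw [h4, ← hd]
      exact Bdeg_spec B hB a₀
  -- the fundamental identity
  have hid : ∀ a : A, B s * E a = E s * B a := by
    intro a
    obtain ⟨n, hn⟩ := hB a
    exact LND.main_id hB hEker hs hss n a hn
  -- B s divides E s
  have hdvd : B s ∣ E s :=
    LND.dvd_of_forall B hB hirr ⟨a₀, ha₀⟩ (B s) (E s) (fun a => ⟨E a, (hid a).symm⟩)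
  obtain ⟨f, hf⟩ := hdvd
  have hfa : ∀ a : A, E a = f * B a := by
    intro a
    apply mul_left_cancel₀ hs
    rw [hid a, hf]
    ring
  by_cases hf0 : f = 0
  · refine ⟨0, map_zero B, Derivation.ext fun a => ?_⟩
    rw [hfa a, hf0]
    simp
  · exact ⟨f, LND.ker_of_mult B hB hE hfa hs hss hf0,
      Derivation.ext fun a => by rw [hfa a]; simp [smul_eq_mul]⟩
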